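/- Work in ℤ[x,y,z,u,t]. Let φ(x,y,z,u,t) = (x·z·t², x·u·y·(t−y), u·y²·(t−y), u·y·(t−y)·z, u·y·(t−y)·t) and let φ² = φ∘φ, a 5-tuple of homogeneous polynomials of degree 16. Then the greatest common divisor of the five components of φ²(x,y,z,u,t) is a homogeneous polynomial of degree 11; equivalently, after dividing out this gcd the reduced second iterate consists of five coprime homogeneous polynomials of degree 5. -/

import Mathlib

open MvPolynomial

/-- Abbreviation for `ℤ[x,y,z,u,t]` with variables `x = X 0`, `y = X 1`, `z = X 2`,
`u = X 3`, `t = X 4`. -/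
abbrev P4R := MvPolynomial (Fin 5) ℤ

/-- The homogeneous degree-4 representative of the birational self-map of `P⁴`:
`φ(x,y,z,u,t) = (x·z·t², x·u·y·(t−y), u·y²·(t−y), u·y·(t−y)·z, u·y·(t−y)·t)`. -/
noncomputable def phiP4 (p : P4R × P4R × P4R × P4R × P4R) :
    P4R × P4R × P4R × P4R × P4R :=
  (p.1 * p.2.2.1 * p.2.2.2.2 ^ 2,
   p.1 * p.2.2.2.1 * p.2.1 * (p.2.2.2.2 - p.2.1),
   p.2.2.2.1 * p.2.1 ^ 2 * (p.2.2.2.2 - p.2.1),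
   p.2.2.2.1 * p.2.1 * (p.2.2.2.2 - p.2.1) * p.2.2.1,
   p.2.2.2.1 * p.2.1 * (p.2.2.2.2 - p.2.1) * p.2.2.2.2)

/-- Each variable `X i` is prime in `ℤ[x,y,z,u,t]`. -/
lemma primeX_P4R (i : Fin 5) : Prime (X i : P4R) := by
  let e := ((renameEquiv ℤ (Equiv.swap i (0 : Fin 5))).trans (finSuccEquiv ℤ 4)).toMulEquiv
  rw [← MulEquiv.prime_iff e]
  have he : e (X i) = Polynomial.X := by
    simp [e, rename_X, Equiv.swap_apply_left, finSuccEquiv_X_zero]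
  rw [he]
  exact Polynomial.prime_X

/-- The gcd of the five components of the second compositional iterate `φ² = φ ∘ φ`
(a 5-tuple of homogeneous polynomials of degree 16) is a homogeneous polynomial of
degree 11; equivalently, after dividing out this gcd the reduced second iterate consists
of five coprime homogeneous polynomials of degree 5. -/
theorem phiP4_second_iterate_gcd :
    ∃ g q₀ q₁ q₂ q₃ q₄ : P4R,
      g.IsHomogeneous 11 ∧
      q₀.IsHomogeneous 5 ∧ q₁.IsHomogeneous 5 ∧ q₂.IsHomogeneous 5 ∧
      q₃.IsHomogeneous 5 ∧ q₄.IsHomogeneous 5 ∧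
      (phiP4 (phiP4 (X 0, X 1, X 2, X 3, X 4))).1 = g * q₀ ∧
      (phiP4 (phiP4 (X 0, X 1, X 2, X 3, X 4))).2.1 = g * q₁ ∧
      (phiP4 (phiP4 (X 0, X 1, X 2, X 3, X 4))).2.2.1 = g * q₂ ∧
      (phiP4 (phiP4 (X 0, X 1, X 2, X 3, X 4))).2.2.2.1 = g * q₃ ∧
      (phiP4 (phiP4 (X 0, X 1, X 2, X 3, X 4))).2.2.2.2 = g * q₄ ∧
      (∀ h : P4R,
        h ∣ (phiP4 (phiP4 (X 0, X 1, X 2, X 3, X 4))).1 →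
        h ∣ (phiP4 (phiP4 (X 0, X 1, X 2, X 3, X 4))).2.1 →
        h ∣ (phiP4 (phiP4 (X 0, X 1, X 2, X 3, X 4))).2.2.1 →
        h ∣ (phiP4 (phiP4 (X 0, X 1, X 2, X 3, X 4))).2.2.2.1 →
        h ∣ (phiP4 (phiP4 (X 0, X 1, X 2, X 3, X 4))).2.2.2.2 → h ∣ g) ∧
      (∀ h : P4R, h ∣ q₀ → h ∣ q₁ → h ∣ q₂ → h ∣ q₃ → h ∣ q₄ → IsUnit h) := by
  classical
  letI : GCDMonoid P4R := UniqueFactorizationMonoid.toGCDMonoid P4R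
  set w : P4R := X 3 * X 1 * (X 4 - X 1) with hw
  set g : P4R := X 0 * X 2 * w ^ 3 with hg
  set q₀ : P4R := X 1 * X 4 ^ 4 with hq₀
  set q₁ : P4R := X 0 * X 2 * X 4 ^ 2 * (X 4 - X 0) with hq₁
  set q₂ : P4R := X 0 * (X 4 - X 0) * w with hq₂
  set q₃ : P4R := X 1 * (X 4 - X 0) * w with hq₃
  set q₄ : P4R := X 4 * (X 4 - X 0) * w with hq₄
  have hX : ∀ i : Fin 5, (X i : P4R).IsHomogeneous 1 := fun i => isHomogeneous_X ℤ i
  have hwH : w.IsHomogeneous 3 := ((hX 3).mul (hX 1)).mul ((hX 4).sub (hX 1))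
  have hsub40 : ((X 4 - X 0 : P4R)).IsHomogeneous 1 := (hX 4).sub (hX 0)
  -- the five factorizations
  have e0 : (phiP4 (phiP4 (X 0, X 1, X 2, X 3, X 4))).1 = g * q₀ := by
    simp only [phiP4, hw, hg, hq₀]; ring
  have e1 : (phiP4 (phiP4 (X 0, X 1, X 2, X 3, X 4))).2.1 = g * q₁ := by
    simp only [phiP4, hw, hg, hq₁]; ring
  have e2 : (phiP4 (phiP4 (X 0, X 1, X 2, X 3, X 4))).2.2.1 = g * q₂ := by
    simp only [phiP4, hw, hg, hq₂]; ring
  have e3 : (phiP4 (phiP4 (X 0, X 1, X 2, X 3, X 4))).2.2.2.1 = g * q₃ := by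
    simp only [phiP4, hw, hg, hq₃]; ring
  have e4 : (phiP4 (phiP4 (X 0, X 1, X 2, X 3, X 4))).2.2.2.2 = g * q₄ := by
    simp only [phiP4, hw, hg, hq₄]; ring
  -- coprimality of the quotients
  have hcop : ∀ h : P4R, h ∣ q₀ → h ∣ q₁ → h ∣ q₂ → IsUnit h := by
    intro h h0 h1 h2
    by_contra hu
    have hne : h ≠ 0 := by
      rintro rfl
      obtain ⟨r, hr⟩ := h0
      have := congrArg (MvPolynomial.eval (fun _ => (1 : ℤ))) hr
      simp [hq₀] at this
    obtain ⟨p, hpirr, hpd⟩ := WfDvdMonoid.exists_irreducible_factor hu hne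
    have hpp : Prime p := UniqueFactorizationMonoid.irreducible_iff_prime.mp hpirr
    have hpq0 : p ∣ X 1 * X 4 ^ 4 := hpd.trans (by rwa [hq₀] at h0)
    rcases hpp.2.2 _ _ hpq0 with hc | hc
    · -- p ∣ X 1, so X 1 ∣ q₁, contradiction by evaluation
      have hx1p : (X 1 : P4R) ∣ p := hpirr.dvd_symm (primeX_P4R 1).irreducible hc
      obtain ⟨r, hr⟩ := (hx1p.trans hpd).trans h1
      have := congrArg (MvPolynomial.eval (![1, 0, 1, 1, 2] : Fin 5 → ℤ)) hr
      simp [hq₁] at this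
    · -- p ∣ X 4, so X 4 ∣ q₂, contradiction by evaluation
      have hc4 : p ∣ X 4 := hpp.dvd_of_dvd_pow hc
      have hx4p : (X 4 : P4R) ∣ p := hpirr.dvd_symm (primeX_P4R 4).irreducible hc4
      obtain ⟨r, hr⟩ := (hx4p.trans hpd).trans h2
      have := congrArg (MvPolynomial.eval (![1, 1, 1, 1, 0] : Fin 5 → ℤ)) hr
      simp [hq₂, hw] at this
  refine ⟨g, q₀, q₁, q₂, q₃, q₄, ?_, ?_, ?_, ?_, ?_, ?_, e0, e1, e2, e3, e4, ?_, ?_⟩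
  · exact ((hX 0).mul (hX 2)).mul (hwH.pow 3)
  · exact (hX 1).mul ((hX 4).pow 4)
  · exact (((hX 0).mul (hX 2)).mul ((hX 4).pow 2)).mul hsub40
  · exact ((hX 0).mul hsub40).mul hwH
  · exact ((hX 1).mul hsub40).mul hwH
  · exact ((hX 4).mul hsub40).mul hwH
  · intro h d0 d1 d2 d3 d4
    rw [e0] at d0; rw [e1] at d1; rw [e2] at d2
    have key : ∀ a b : P4R, h ∣ g * a → h ∣ g * b → h ∣ g * gcd a b := by
      intro a b ha hb
      exact (dvd_gcd ha hb).trans (gcd_mul_left' g a b).dvd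
    have hdG : h ∣ g * gcd q₀ (gcd q₁ q₂) := key _ _ d0 (key _ _ d1 d2)
    have hGu : IsUnit (gcd q₀ (gcd q₁ q₂)) :=
      hcop _ (gcd_dvd_left _ _) ((gcd_dvd_right _ _).trans (gcd_dvd_left _ _))
        ((gcd_dvd_right _ _).trans (gcd_dvd_right _ _))
    have h1g : g * gcd q₀ (gcd q₁ q₂) ∣ g * 1 := mul_dvd_mul_left g hGu.dvd
    exact hdG.trans (by simpa using h1g)
  · intro h h0 h1 h2 _ _
    exact hcop h h0 h1 h2
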